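/- (Diffusion map: positive semi-definiteness.) Let ε > 0, let g_ε(z) = exp(−|z|²/(4ε)) be the Gaussian kernel on ℝ^d, and let U : ℝ^d → ℝ be measurable and bounded below, with 0 < Z := ∫∫ g_ε(x−y) e^{−U(x)−U(y)} dx dy < ∞. Define T_ε f(x) = (∫ g_ε(x−y) e^{−U(y)} f(y) dy) / (∫ g_ε(x−y) e^{−U(y)} dy) and let π be the probability measure with density π(x) = (1/Z) e^{−U(x)} ∫ g_ε(x−y) e^{−U(y)} dy. Then T_ε is positive semi-definite on L²(π): for all f ∈ L²(π), ⟨f, T_ε f⟩_π = (1/Z) ∫∫ g_ε(x−y) (e^{−U} f)(x) (e^{−U} f)(y) dx dy ≥ 0. -/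

import Mathlib

open MeasureTheory ProbabilityTheory

section Aux

variable {d : ℕ}

private lemma gauss_integrable (b : ℝ) (hb : 0 < b) :
    Integrable (fun v : EuclideanSpace ℝ (Fin d) => Real.exp (-(b * ‖v‖ ^ 2))) volume := by
  have h1 := (GaussianFourier.integrable_cexp_neg_mul_sq_norm_add
    (V := EuclideanSpace ℝ (Fin d)) (b := (b:ℂ)) (by simpa using hb) 0 0).norm
  exact h1.congr (Filter.Eventually.of_forall fun v => by
    simp [Complex.norm_exp, ← Complex.ofReal_pow])

end Aux

set_option maxHeartbeats 1000000 in
/-- **Diffusion map: positive semi-definiteness.** The diffusion map operator `T_ε` is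
positive semi-definite on `L²(π)`: for all `f ∈ L²(π)`,
`⟨f, T_ε f⟩_π = (1/Z) ∫∫ g_ε(x-y) (e^{-U} f)(x) (e^{-U} f)(y) dx dy ≥ 0`. -/
theorem diffusion_map_positive_semidefinite
    {d : ℕ} (ε : ℝ) (hε : 0 < ε)
    (gε : EuclideanSpace ℝ (Fin d) → ℝ)
    (hg : ∀ z, gε z = Real.exp (-‖z‖ ^ 2 / (4 * ε)))
    (U : EuclideanSpace ℝ (Fin d) → ℝ) (hUmeas : Measurable U)
    (hUbdd : ∃ c : ℝ, ∀ x, c ≤ U x)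
    (Z : ℝ) (hZpos : 0 < Z)
    (hZ : ENNReal.ofReal Z
      = ∫⁻ x, ∫⁻ y, ENNReal.ofReal (gε (x - y) * Real.exp (-U x - U y)) ∂volume ∂volume)
    (T : (EuclideanSpace ℝ (Fin d) → ℝ) → (EuclideanSpace ℝ (Fin d) → ℝ))
    (hT : ∀ f x, T f x
      = (∫ y, gε (x - y) * Real.exp (-U y) * f y) / (∫ y, gε (x - y) * Real.exp (-U y)))
    (π : Measure (EuclideanSpace ℝ (Fin d)))
    (hπ : π = volume.withDensity
      (fun x => ENNReal.ofReal ((1 / Z) * Real.exp (-U x) * ∫ y, gε (x - y) * Real.exp (-U y)))) :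
    ∀ f : EuclideanSpace ℝ (Fin d) → ℝ, MemLp f 2 π →
      (∫ x, f x * T f x ∂π
        = (1 / Z) * ∫ x, (∫ y, gε (x - y) * (Real.exp (-U x) * f x)
            * (Real.exp (-U y) * f y) ∂volume) ∂volume)
      ∧ 0 ≤ ∫ x, f x * T f x ∂π := by
  intro f hf
  obtain ⟨c, hc⟩ := hUbdd
  -- basic facts about the kernel
  have hgm : Measurable gε := by
    have hge : gε = fun z => Real.exp (-‖z‖ ^ 2 / (4 * ε)) := funext hg
    rw [hge]
    exact (Real.continuous_exp.comp ((continuous_norm.pow 2).neg.div_const _)).measurable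
  have hgpos : ∀ z, 0 < gε z := fun z => by rw [hg]; exact Real.exp_pos _
  have hgeven : ∀ z w : EuclideanSpace ℝ (Fin d), gε (z - w) = gε (w - z) := fun z w => by
    rw [hg, hg, norm_sub_rev]
  -- the Gaussian `gε` is integrable
  have hgint : Integrable gε volume := by
    refine (gauss_integrable ((4*ε)⁻¹) (by positivity)).congr
      (Filter.Eventually.of_forall fun v => ?_)
    rw [hg]
    exact congrArg Real.exp (by field_simp)
  -- the base kernel is integrable in y for eac(Real.exp (-U x) * f' x)
  have hbint : ∀ x : EuclideanSpace ℝ (Fin d), Integrable (fun y => gε (x - y) * Real.exp (-U y)) volume := by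
    intro x
    have hgx : Integrable (fun y : EuclideanSpace ℝ (Fin d) => gε (x - y)) volume := by
      have := (hgint.comp_sub_left x)
      simpa using this
    refine (hgx.const_mul (Real.exp (-c))).mono'
      (((hgm.comp (measurable_const.sub measurable_id)).mul
        (Real.measurable_exp.comp hUmeas.neg)).aestronglyMeasurable)
      (Filter.Eventually.of_forall fun y => ?_)
    rw [Real.norm_eq_abs, abs_of_nonneg (mul_nonneg (hgpos _).le (Real.exp_pos _).le)]
    calc gε (x - y) * Real.exp (-U y) ≤ gε (x - y) * Real.exp (-c) := by
          gcongr
          · exact (hgpos _).le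
          · exact hc y
      _ = Real.exp (-c) * gε (x - y) := mul_comm _ _
  -- positivity of the normalisation D
  have hDpos : ∀ x : EuclideanSpace ℝ (Fin d), 0 < ∫ y, gε (x - y) * Real.exp (-U y) := by
    intro x
    refine (integral_pos_iff_support_of_nonneg
      (fun y => (mul_pos (hgpos _) (Real.exp_pos _)).le) (hbint x)).mpr ?_
    have hsupp : Function.support (fun y => gε (x - y) * Real.exp (-U y)) = Set.univ :=
      Set.eq_univ_of_forall fun y => (mul_pos (hgpos _) (Real.exp_pos _)).ne'
    rw [hsupp]
    exact isOpen_univ.measure_pos _ ⟨0, trivial⟩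
  -- measurability of D
  have hprodmeas : Measurable (fun p : EuclideanSpace ℝ (Fin d) × EuclideanSpace ℝ (Fin d) => gε (p.1 - p.2) * Real.exp (-U p.2)) :=
    (hgm.comp (measurable_fst.sub measurable_snd)).mul
      ((Real.measurable_exp.comp hUmeas.neg).comp measurable_snd)
  have hDmeas : Measurable (fun x : EuclideanSpace ℝ (Fin d) => ∫ y, gε (x - y) * Real.exp (-U y)) :=
    hprodmeas.stronglyMeasurable.integral_prod_right'.measurable
  -- the density
  have hρmeas : Measurable (fun x : EuclideanSpace ℝ (Fin d) => 1 / Z * Real.exp (-U x) * ∫ y, gε (x - y) * Real.exp (-U y)) :=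
    (measurable_const.mul (Real.measurable_exp.comp hUmeas.neg)).mul hDmeas
  have hρpos : ∀ x : EuclideanSpace ℝ (Fin d), 0 < 1 / Z * Real.exp (-U x) * ∫ y, gε (x - y) * Real.exp (-U y) :=
    fun x => mul_pos (mul_pos (by positivity) (Real.exp_pos _)) (hDpos x)
  have habs' : π ≪ volume := by rw [hπ]; exact withDensity_absolutelyContinuous _ _
  have habs : volume ≪ π := by
    rw [hπ]
    exact withDensity_absolutelyContinuous' hρmeas.ennreal_ofReal.aemeasurable
      (Filter.Eventually.of_forall fun x => (ENNReal.ofReal_pos.mpr (hρpos x)).ne')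
  -- a strongly measurable representative of f
  obtain ⟨f', hf'sm, hff'⟩ := hf.1
  have hffvol : f =ᵐ[volume] f' := habs.ae_eq hff'
  have hf'm : Measurable f' := hf'sm.measurable
  have hhm : Measurable (fun x : EuclideanSpace ℝ (Fin d) => Real.exp (-U x) * f' x) :=
    (Real.measurable_exp.comp hUmeas.neg).mul hf'm
  -- replace f by f' in the numerator
  have hNe : ∀ x : EuclideanSpace ℝ (Fin d), (∫ y, gε (x - y) * Real.exp (-U y) * f y)
      = ∫ y, gε (x - y) * Real.exp (-U y) * f' y := fun x =>
    integral_congr_ae (hffvol.mono fun y hy => by dsimp only; rw [hy])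
  -- the two inner integrals
  have hJint : ∀ x : EuclideanSpace ℝ (Fin d), (∫ y, gε (x - y) * (Real.exp (-U x) * f' x) * (Real.exp (-U y) * f' y))
      = (Real.exp (-U x) * f' x) * ∫ y, gε (x - y) * Real.exp (-U y) * f' y := by
    intro x
    rw [show (fun y => gε (x - y) * (Real.exp (-U x) * f' x) * (Real.exp (-U y) * f' y))
        = fun y => (Real.exp (-U x) * f' x) * (gε (x - y) * Real.exp (-U y) * f' y) from
      funext fun y => by ring, integral_const_mul]
  -- Step A: the main identity
  have hIJ : ∫ x, (∫ y, gε (x - y) * (Real.exp (-U x) * f x) * (Real.exp (-U y) * f y))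
      = ∫ x, (∫ y, gε (x - y) * (Real.exp (-U x) * f' x) * (Real.exp (-U y) * f' y)) := by
    refine integral_congr_ae (hffvol.mono fun x hx => ?_)
    refine integral_congr_ae (hffvol.mono fun y hy => ?_)
    simp only [hx, hy]
  have hmain : ∫ x, f x * T f x ∂π = (1 / Z) * ∫ x, (∫ y, gε (x - y) * (Real.exp (-U x) * f' x) * (Real.exp (-U y) * f' y)) := by
    rw [hπ]
    rw [show (fun x : EuclideanSpace ℝ (Fin d) => ENNReal.ofReal
          (1 / Z * Real.exp (-U x) * ∫ y, gε (x - y) * Real.exp (-U y)))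
        = fun x : EuclideanSpace ℝ (Fin d) => ((Real.toNNReal
          (1 / Z * Real.exp (-U x) * ∫ y, gε (x - y) * Real.exp (-U y)) : NNReal) : ENNReal)
      from rfl]
    rw [integral_withDensity_eq_integral_smul hρmeas.real_toNNReal]
    rw [← integral_const_mul]
    refine integral_congr_ae (hffvol.mono fun x hx => ?_)
    dsimp only
    rw [NNReal.smul_def, Real.coe_toNNReal _ (hρpos x).le]
    rw [hT f x, hNe x, hx, hJint x]
    have hD := (hDpos x).ne'
    have hZ0 := hZpos.ne'
    rw [smul_eq_mul]
    field_simp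
  refine ⟨by rw [hmain, ← hIJ], ?_⟩
  rw [hmain]
  -- Step B: nonnegativity
  have hZ' : (0:ℝ) ≤ 1 / Z := by positivity
  refine mul_nonneg hZ' ?_
  -- integrability of f'^2 against the density
  have hsqπ : Integrable (fun x => f' x ^ 2) π :=
    hf.integrable_sq.congr (hff'.mono fun x hx => by dsimp only; rw [hx])
  have hsqvol : Integrable (fun x => f' x ^ 2 *
      (1 / Z * Real.exp (-U x) * ∫ y, gε (x - y) * Real.exp (-U y))) volume := by
    rw [hπ] at hsqπ
    have h2 := (integrable_withDensity_iff hρmeas.ennreal_ofReal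
      (Filter.Eventually.of_forall fun x => ENNReal.ofReal_lt_top)).mp hsqπ
    exact h2.congr (Filter.Eventually.of_forall fun x => by
      dsimp only; rw [ENNReal.toReal_ofReal (hρpos x).le])
  -- the first bound term
  have hB1 : Integrable (fun p : EuclideanSpace ℝ (Fin d) × EuclideanSpace ℝ (Fin d) =>
      f' p.1 ^ 2 * Real.exp (-U p.1) * (gε (p.1 - p.2) * Real.exp (-U p.2)))
      (volume.prod volume) := by
    have hmB : AEStronglyMeasurable (fun p : EuclideanSpace ℝ (Fin d) × EuclideanSpace ℝ (Fin d) =>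
        f' p.1 ^ 2 * Real.exp (-U p.1) * (gε (p.1 - p.2) * Real.exp (-U p.2)))
        (volume.prod volume) :=
      ((((hf'm.comp measurable_fst).pow_const 2).mul
        ((Real.measurable_exp.comp hUmeas.neg).comp measurable_fst)).mul
          hprodmeas).aestronglyMeasurable
    rw [integrable_prod_iff hmB]
    constructor
    · refine Filter.Eventually.of_forall fun x => ?_
      dsimp only
      exact (hbint x).const_mul (f' x ^ 2 * Real.exp (-U x))
    · have heq : (fun x => ∫ y, ‖f' x ^ 2 * Real.exp (-U x) * (gε (x - y) * Real.exp (-U y))‖)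
          = fun x => f' x ^ 2 * Real.exp (-U x) * ∫ y, gε (x - y) * Real.exp (-U y) := by
        funext x
        rw [show (fun y => ‖f' x ^ 2 * Real.exp (-U x) * (gε (x - y) * Real.exp (-U y))‖)
            = fun y => (f' x ^ 2 * Real.exp (-U x)) * (gε (x - y) * Real.exp (-U y)) from
          funext fun y => by
            rw [Real.norm_eq_abs, abs_of_nonneg (mul_nonneg
              (mul_nonneg (sq_nonneg _) (Real.exp_pos _).le)
              (mul_nonneg (hgpos _).le (Real.exp_pos _).le))],
          integral_const_mul]
      rw [heq]
      refine (hsqvol.const_mul Z).congr (Filter.Eventually.of_forall fun x => ?_)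
      dsimp only
      field_simp
  -- the second bound term, by symmetry
  have hB2 : Integrable (fun p : EuclideanSpace ℝ (Fin d) × EuclideanSpace ℝ (Fin d) =>
      f' p.2 ^ 2 * Real.exp (-U p.2) * (gε (p.1 - p.2) * Real.exp (-U p.1)))
      (volume.prod volume) := by
    refine hB1.swap.congr (Filter.Eventually.of_forall fun p => ?_)
    dsimp only [Function.comp_apply, Prod.swap]
    rw [hgeven p.2 p.1]
  -- integrability of the double integrand W
  have hWm : Measurable (fun p : EuclideanSpace ℝ (Fin d) × EuclideanSpace ℝ (Fin d) =>
      gε (p.1 - p.2) * (Real.exp (-U p.1) * f' p.1) * (Real.exp (-U p.2) * f' p.2)) :=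
    ((hgm.comp (measurable_fst.sub measurable_snd)).mul (hhm.comp measurable_fst)).mul
      (hhm.comp measurable_snd)
  have hW : Integrable (fun p : EuclideanSpace ℝ (Fin d) × EuclideanSpace ℝ (Fin d) =>
      gε (p.1 - p.2) * (Real.exp (-U p.1) * f' p.1) * (Real.exp (-U p.2) * f' p.2)) (volume.prod volume) := by
    refine ((hB1.add hB2).const_mul (1/2 : ℝ)).mono' hWm.aestronglyMeasurable
      (Filter.Eventually.of_forall fun p => ?_)
    simp only [Pi.add_apply]
    simp only [Real.norm_eq_abs, abs_mul, Real.abs_exp]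
    rw [abs_of_pos (hgpos _)]
    have hint : 0 ≤ gε (p.1 - p.2) * Real.exp (-U p.1) * Real.exp (-U p.2)
        * ((|f' p.1| - |f' p.2|) ^ 2) :=
      mul_nonneg (mul_nonneg (mul_nonneg (hgpos _).le (Real.exp_pos _).le)
        (Real.exp_pos _).le) (sq_nonneg _)
    have habs2 : (|f' p.1| - |f' p.2|) ^ 2
        = f' p.1 ^ 2 + f' p.2 ^ 2 - 2 * (|f' p.1| * |f' p.2|) := by
      rw [sub_sq, sq_abs, sq_abs]
      ring
    rw [habs2] at hint
    nlinarith [hint]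
  -- the Gaussian convolution identity
  have hKint : Integrable (fun z : EuclideanSpace ℝ (Fin d) => Real.exp (-‖z‖ ^ 2 / ε)) volume :=
    (gauss_integrable ε⁻¹ (by positivity)).congr (Filter.Eventually.of_forall fun z =>
      congrArg Real.exp (by field_simp))
  have hCpos : 0 < ∫ z : EuclideanSpace ℝ (Fin d), Real.exp (-‖z‖ ^ 2 / ε) := by
    refine (integral_pos_iff_support_of_nonneg (fun z => (Real.exp_pos _).le) hKint).mpr ?_
    have hsupp : Function.support (fun z : EuclideanSpace ℝ (Fin d) =>
        Real.exp (-‖z‖ ^ 2 / ε)) = Set.univ :=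
      Set.eq_univ_of_forall fun z => (Real.exp_pos _).ne'
    rw [hsupp]
    exact isOpen_univ.measure_pos _ ⟨0, trivial⟩
  have key : ∀ x y z : EuclideanSpace ℝ (Fin d),
      Real.exp (-‖x - z‖ ^ 2 / (2 * ε)) * Real.exp (-‖z - y‖ ^ 2 / (2 * ε))
      = gε (x - y) * Real.exp (-‖z - (2:ℝ)⁻¹ • (x + y)‖ ^ 2 / ε) := by
    intro x y z
    have hxz : x - z = ((2:ℝ)⁻¹ • (x - y)) + ((2:ℝ)⁻¹ • (x + y) - z) := by module
    have hzy : z - y = ((2:ℝ)⁻¹ • (x - y)) - ((2:ℝ)⁻¹ • (x + y) - z) := by module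
    have h3 : ‖(2:ℝ)⁻¹ • (x + y) - z‖ = ‖z - (2:ℝ)⁻¹ • (x + y)‖ := norm_sub_rev _ _
    have h2 : ‖(2:ℝ)⁻¹ • (x - y)‖ ^ 2 = ‖x - y‖ ^ 2 / 4 := by
      rw [norm_smul, Real.norm_eq_abs, abs_of_pos (by norm_num : (0:ℝ) < (2:ℝ)⁻¹), mul_pow]
      ring
    have hm : ‖(2:ℝ)⁻¹ • (x + y) - z‖ ^ 2 = ‖z - (2:ℝ)⁻¹ • (x + y)‖ ^ 2 := by rw [h3]
    have h4 := norm_add_sq_real ((2:ℝ)⁻¹ • (x - y)) ((2:ℝ)⁻¹ • (x + y) - z)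
    have h5 := norm_sub_sq_real ((2:ℝ)⁻¹ • (x - y)) ((2:ℝ)⁻¹ • (x + y) - z)
    rw [← hxz] at h4
    rw [← hzy] at h5
    have hsum : ‖x - z‖ ^ 2 + ‖z - y‖ ^ 2
        = ‖x - y‖ ^ 2 / 2 + 2 * ‖z - (2:ℝ)⁻¹ • (x + y)‖ ^ 2 := by
      rw [h4, h5]
      linarith [h2, hm]
    rw [← Real.exp_add, hg, ← Real.exp_add]
    congr 1
    have hrw : -‖x - z‖ ^ 2 / (2 * ε) + -‖z - y‖ ^ 2 / (2 * ε)
        = -(‖x - z‖ ^ 2 + ‖z - y‖ ^ 2) / (2 * ε) := by ring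
    rw [hrw, hsum]
    field_simp
    ring
  have hconv : ∀ x y : EuclideanSpace ℝ (Fin d),
      (∫ z, Real.exp (-‖x - z‖ ^ 2 / (2 * ε)) * Real.exp (-‖z - y‖ ^ 2 / (2 * ε)))
      = (∫ z : EuclideanSpace ℝ (Fin d), Real.exp (-‖z‖ ^ 2 / ε)) * gε (x - y) := by
    intro x y
    rw [show (fun z => Real.exp (-‖x - z‖ ^ 2 / (2 * ε)) * Real.exp (-‖z - y‖ ^ 2 / (2 * ε)))
        = fun z => gε (x - y) * Real.exp (-‖z - (2:ℝ)⁻¹ • (x + y)‖ ^ 2 / ε) from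
      funext fun z => key x y z, integral_const_mul,
      integral_sub_right_eq_self (μ := volume)
        (fun z : EuclideanSpace ℝ (Fin d) => Real.exp (-‖z‖ ^ 2 / ε)) ((2:ℝ)⁻¹ • (x + y)),
      mul_comm]
  -- Fubini for the triple integral
  have hGm : Measurable (fun w : EuclideanSpace ℝ (Fin d) => Real.exp (-‖w‖ ^ 2 / (2 * ε))) :=
    (Real.continuous_exp.comp ((continuous_norm.pow 2).neg.div_const _)).measurable
  have hFm : AEStronglyMeasurable (fun q : (EuclideanSpace ℝ (Fin d) × EuclideanSpace ℝ (Fin d)) × EuclideanSpace ℝ (Fin d) =>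
      (Real.exp (-‖q.1.1 - q.2‖ ^ 2 / (2 * ε)) * (Real.exp (-U q.1.1) * f' q.1.1))
        * (Real.exp (-‖q.2 - q.1.2‖ ^ 2 / (2 * ε)) * (Real.exp (-U q.1.2) * f' q.1.2)))
      ((volume.prod volume).prod volume) := by
    exact (((hGm.comp ((measurable_fst.comp measurable_fst).sub measurable_snd)).mul
      (hhm.comp (measurable_fst.comp measurable_fst))).mul
      ((hGm.comp (measurable_snd.sub (measurable_snd.comp measurable_fst))).mul
      (hhm.comp (measurable_snd.comp measurable_fst)))).aestronglyMeasurable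
  have hFint : Integrable (fun q : (EuclideanSpace ℝ (Fin d) × EuclideanSpace ℝ (Fin d)) × EuclideanSpace ℝ (Fin d) =>
      (Real.exp (-‖q.1.1 - q.2‖ ^ 2 / (2 * ε)) * (Real.exp (-U q.1.1) * f' q.1.1))
        * (Real.exp (-‖q.2 - q.1.2‖ ^ 2 / (2 * ε)) * (Real.exp (-U q.1.2) * f' q.1.2)))
      ((volume.prod volume).prod volume) := by
    rw [integrable_prod_iff hFm]
    constructor
    · refine Filter.Eventually.of_forall fun p => ?_
      refine ((hKint.comp_sub_right ((2:ℝ)⁻¹ • (p.1 + p.2))).const_mul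
        (gε (p.1 - p.2) * ((Real.exp (-U p.1) * f' p.1) * (Real.exp (-U p.2) * f' p.2)))).congr (Filter.Eventually.of_forall fun z => ?_)
      dsimp only
      have hk := key p.1 p.2 z
      linear_combination (-((Real.exp (-U p.1) * f' p.1) * (Real.exp (-U p.2) * f' p.2))) * hk
    · have hptwise : ∀ (p : EuclideanSpace ℝ (Fin d) × EuclideanSpace ℝ (Fin d))
          (z : EuclideanSpace ℝ (Fin d)),
          ‖(Real.exp (-‖p.1 - z‖ ^ 2 / (2 * ε)) * (Real.exp (-U p.1) * f' p.1))
            * (Real.exp (-‖z - p.2‖ ^ 2 / (2 * ε)) * (Real.exp (-U p.2) * f' p.2))‖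
          = (gε (p.1 - p.2) * |(Real.exp (-U p.1) * f' p.1) * (Real.exp (-U p.2) * f' p.2)|)
              * Real.exp (-‖z - (2:ℝ)⁻¹ • (p.1 + p.2)‖ ^ 2 / ε) := by
        intro p z
        simp only [Real.norm_eq_abs, abs_mul, Real.abs_exp]
        have hk := key p.1 p.2 z
        linear_combination (Real.exp (-U p.1) * |f' p.1|
          * (Real.exp (-U p.2) * |f' p.2|)) * hk
      have heq : (fun p : EuclideanSpace ℝ (Fin d) × EuclideanSpace ℝ (Fin d) =>
            ∫ z, ‖(Real.exp (-‖p.1 - z‖ ^ 2 / (2 * ε)) * (Real.exp (-U p.1) * f' p.1))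
              * (Real.exp (-‖z - p.2‖ ^ 2 / (2 * ε)) * (Real.exp (-U p.2) * f' p.2))‖)
          = fun p : EuclideanSpace ℝ (Fin d) × EuclideanSpace ℝ (Fin d) =>
              (gε (p.1 - p.2) * |(Real.exp (-U p.1) * f' p.1) * (Real.exp (-U p.2) * f' p.2)|)
                * ∫ z : EuclideanSpace ℝ (Fin d), Real.exp (-‖z‖ ^ 2 / ε) := by
        funext p
        rw [show (fun z => ‖(Real.exp (-‖p.1 - z‖ ^ 2 / (2 * ε)) * (Real.exp (-U p.1) * f' p.1))
              * (Real.exp (-‖z - p.2‖ ^ 2 / (2 * ε)) * (Real.exp (-U p.2) * f' p.2))‖)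
            = fun z => (gε (p.1 - p.2) * |(Real.exp (-U p.1) * f' p.1) * (Real.exp (-U p.2) * f' p.2)|)
                * Real.exp (-‖z - (2:ℝ)⁻¹ • (p.1 + p.2)‖ ^ 2 / ε) from
          funext fun z => hptwise p z, integral_const_mul,
          integral_sub_right_eq_self (μ := volume)
            (fun z : EuclideanSpace ℝ (Fin d) => Real.exp (-‖z‖ ^ 2 / ε)) _]
      rw [heq]
      refine (hW.norm.mul_const (∫ z : EuclideanSpace ℝ (Fin d), Real.exp (-‖z‖ ^ 2 / ε))).congr (Filter.Eventually.of_forall fun p => ?_)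
      dsimp only
      simp only [Real.norm_eq_abs, abs_mul, Real.abs_exp]
      rw [abs_of_pos (hgpos _)]
      ring
  -- putting it together
  have hJW : (∫ x, ∫ y, gε (x - y) * (Real.exp (-U x) * f' x) * (Real.exp (-U y) * f' y))
      = ∫ p : EuclideanSpace ℝ (Fin d) × EuclideanSpace ℝ (Fin d),
          gε (p.1 - p.2) * (Real.exp (-U p.1) * f' p.1) * (Real.exp (-U p.2) * f' p.2) ∂(volume.prod volume) :=
    integral_integral (f := fun x y => gε (x - y) * (Real.exp (-U x) * f' x) * (Real.exp (-U y) * f' y)) hW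
  have hCW : ∀ p : EuclideanSpace ℝ (Fin d) × EuclideanSpace ℝ (Fin d),
      (∫ z, (Real.exp (-‖p.1 - z‖ ^ 2 / (2 * ε)) * (Real.exp (-U p.1) * f' p.1))
        * (Real.exp (-‖z - p.2‖ ^ 2 / (2 * ε)) * (Real.exp (-U p.2) * f' p.2)))
      = (∫ z : EuclideanSpace ℝ (Fin d), Real.exp (-‖z‖ ^ 2 / ε))
          * (gε (p.1 - p.2) * (Real.exp (-U p.1) * f' p.1) * (Real.exp (-U p.2) * f' p.2)) := by
    intro p
    rw [show (fun z => (Real.exp (-‖p.1 - z‖ ^ 2 / (2 * ε)) * (Real.exp (-U p.1) * f' p.1))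
          * (Real.exp (-‖z - p.2‖ ^ 2 / (2 * ε)) * (Real.exp (-U p.2) * f' p.2)))
        = fun z => ((Real.exp (-U p.1) * f' p.1) * (Real.exp (-U p.2) * f' p.2)) * (Real.exp (-‖p.1 - z‖ ^ 2 / (2 * ε))
            * Real.exp (-‖z - p.2‖ ^ 2 / (2 * ε))) from funext fun z => by ring,
      integral_const_mul, hconv p.1 p.2]
    ring
  have hswap := integral_integral_swap
    (f := fun (p : EuclideanSpace ℝ (Fin d) × EuclideanSpace ℝ (Fin d))
        (z : EuclideanSpace ℝ (Fin d)) =>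
      (Real.exp (-‖p.1 - z‖ ^ 2 / (2 * ε)) * (Real.exp (-U p.1) * f' p.1))
        * (Real.exp (-‖z - p.2‖ ^ 2 / (2 * ε)) * (Real.exp (-U p.2) * f' p.2))) hFint
  have hprodsq : ∀ z : EuclideanSpace ℝ (Fin d),
      (∫ p : EuclideanSpace ℝ (Fin d) × EuclideanSpace ℝ (Fin d),
        (Real.exp (-‖p.1 - z‖ ^ 2 / (2 * ε)) * (Real.exp (-U p.1) * f' p.1))
          * (Real.exp (-‖z - p.2‖ ^ 2 / (2 * ε)) * (Real.exp (-U p.2) * f' p.2)) ∂(volume.prod volume))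
      = (∫ x, Real.exp (-‖x - z‖ ^ 2 / (2 * ε)) * (Real.exp (-U x) * f' x)) ^ 2 := by
    intro z
    have h2nd : (∫ y, Real.exp (-‖z - y‖ ^ 2 / (2 * ε)) * (Real.exp (-U y) * f' y))
        = ∫ x, Real.exp (-‖x - z‖ ^ 2 / (2 * ε)) * (Real.exp (-U x) * f' x) :=
      integral_congr_ae (Filter.Eventually.of_forall fun y => by dsimp only; rw [norm_sub_rev z y])
    rw [integral_prod_mul (f := fun x => Real.exp (-‖x - z‖ ^ 2 / (2 * ε)) * (Real.exp (-U x) * f' x))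
      (g := fun y => Real.exp (-‖z - y‖ ^ 2 / (2 * ε)) * (Real.exp (-U y) * f' y)), h2nd, sq]
  rw [hJW]
  have hchain : (∫ p : EuclideanSpace ℝ (Fin d) × EuclideanSpace ℝ (Fin d),
        gε (p.1 - p.2) * (Real.exp (-U p.1) * f' p.1) * (Real.exp (-U p.2) * f' p.2) ∂(volume.prod volume))
      = (∫ z : EuclideanSpace ℝ (Fin d), Real.exp (-‖z‖ ^ 2 / ε))⁻¹
        * ∫ z : EuclideanSpace ℝ (Fin d),
            (∫ x, Real.exp (-‖x - z‖ ^ 2 / (2 * ε)) * (Real.exp (-U x) * f' x)) ^ 2 := by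
    have h1 : (∫ p : EuclideanSpace ℝ (Fin d) × EuclideanSpace ℝ (Fin d),
          gε (p.1 - p.2) * (Real.exp (-U p.1) * f' p.1) * (Real.exp (-U p.2) * f' p.2) ∂(volume.prod volume))
        = (∫ z : EuclideanSpace ℝ (Fin d), Real.exp (-‖z‖ ^ 2 / ε))⁻¹
          * ∫ p : EuclideanSpace ℝ (Fin d) × EuclideanSpace ℝ (Fin d),
              (∫ z : EuclideanSpace ℝ (Fin d), Real.exp (-‖z‖ ^ 2 / ε))
                * (gε (p.1 - p.2) * (Real.exp (-U p.1) * f' p.1) * (Real.exp (-U p.2) * f' p.2)) ∂(volume.prod volume) := by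
      rw [integral_const_mul, ← mul_assoc, inv_mul_cancel₀ hCpos.ne', one_mul]
    rw [h1]
    congr 1
    have h2 : (∫ p : EuclideanSpace ℝ (Fin d) × EuclideanSpace ℝ (Fin d),
          (∫ z : EuclideanSpace ℝ (Fin d), Real.exp (-‖z‖ ^ 2 / ε))
            * (gε (p.1 - p.2) * (Real.exp (-U p.1) * f' p.1) * (Real.exp (-U p.2) * f' p.2)) ∂(volume.prod volume))
        = ∫ p : EuclideanSpace ℝ (Fin d) × EuclideanSpace ℝ (Fin d),
            (∫ z, (Real.exp (-‖p.1 - z‖ ^ 2 / (2 * ε)) * (Real.exp (-U p.1) * f' p.1))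
              * (Real.exp (-‖z - p.2‖ ^ 2 / (2 * ε)) * (Real.exp (-U p.2) * f' p.2))) ∂(volume.prod volume) :=
      integral_congr_ae (Filter.Eventually.of_forall fun p => (hCW p).symm)
    rw [h2, hswap]
    exact integral_congr_ae (Filter.Eventually.of_forall fun z => hprodsq z)
  rw [hchain]
  exact mul_nonneg (inv_nonneg.mpr hCpos.le)
    (integral_nonneg fun z => sq_nonneg _)
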